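/- On the lattice of integral intervals Itv (elements ⊥, [ℓ,u] with ℓ ≤ u integers, [-∞,u], [ℓ,+∞], and ⊤ = [-∞,+∞], ordered by containment), the standard interval widening ∇ defined by ⊥ ∇ x = x ∇ ⊥ = x and [ℓ₀,u₀] ∇ [ℓ₁,u₁] = [if ℓ₁ < ℓ₀ then -∞ else ℓ₀, if u₀ < u₁ then +∞ else u₀] is a widening operator: it is an upper bound of its arguments, and for every ascending sequence (aᵢ) the sequence x₀ = a₀, x_{i+1} = xᵢ ∇ a_{i+1} eventually stabilizes. -/

import Mathlib

/-- The domain of integral intervals: `⊥` (the empty interval) or an interval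
with lower bound in `ℤ ∪ {-∞}` and upper bound in `ℤ ∪ {+∞}`. -/
inductive Itv where
  | bot : Itv
  | intv (l : WithBot ℤ) (u : WithTop ℤ) : Itv

/-- Containment order on intervals. -/
def Itv.le : Itv → Itv → Prop
  | .bot, _ => True
  | .intv _ _, .bot => False
  | .intv l₀ u₀, .intv l₁ u₁ => l₁ ≤ l₀ ∧ u₀ ≤ u₁

instance : LE Itv := ⟨Itv.le⟩

/-- The standard interval widening. -/
noncomputable def Itv.widen : Itv → Itv → Itv
  | .bot, x => x
  | x, .bot => x
  | .intv l₀ u₀, .intv l₁ u₁ =>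
      .intv (if l₁ < l₀ then ⊥ else l₀) (if u₀ < u₁ then ⊤ else u₀)

/-- Measure used to prove termination of widening chains. -/
def Itv.m : Itv → ℕ
  | .bot => 3
  | .intv l u => (if l = ⊥ then 0 else 1) + (if u = ⊤ then 0 else 1)

lemma Itv.widen_step (x b : Itv) : x.widen b = x ∨ (x.widen b).m < x.m := by
  cases x with
  | bot =>
    cases b with
    | bot => left; rfl
    | intv l u =>
      right
      show Itv.m (.intv l u) < 3
      simp only [Itv.m]
      split <;> split <;> omega
  | intv l0 u0 =>
    cases b with
    | bot => left; rfl
    | intv l1 u1 =>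
      by_cases h1 : l1 < l0 <;> by_cases h2 : u0 < u1
      · right
        have hb : l0 ≠ ⊥ := ne_bot_of_gt h1
        have ht : u0 ≠ ⊤ := ne_top_of_lt h2
        show Itv.m (.intv (if l1 < l0 then ⊥ else l0) (if u0 < u1 then ⊤ else u0))
            < Itv.m (.intv l0 u0)
        rw [if_pos h1, if_pos h2]
        simp [Itv.m, hb, ht]
      · right
        have hb : l0 ≠ ⊥ := ne_bot_of_gt h1
        show Itv.m (.intv (if l1 < l0 then ⊥ else l0) (if u0 < u1 then ⊤ else u0))
            < Itv.m (.intv l0 u0)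
        rw [if_pos h1, if_neg h2]
        simp [Itv.m, hb]
      · right
        have ht : u0 ≠ ⊤ := ne_top_of_lt h2
        show Itv.m (.intv (if l1 < l0 then ⊥ else l0) (if u0 < u1 then ⊤ else u0))
            < Itv.m (.intv l0 u0)
        rw [if_neg h1, if_pos h2]
        simp [Itv.m, ht]
      · left
        show Itv.intv (if l1 < l0 then ⊥ else l0) (if u0 < u1 then ⊤ else u0) = _
        rw [if_neg h1, if_neg h2]

theorem stmt10 :
    (∀ a b : Itv, a ≤ Itv.widen a b ∧ b ≤ Itv.widen a b) ∧
    (∀ a : ℕ → Itv, (∀ i, a i ≤ a (i+1)) →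
      ∀ x : ℕ → Itv, x 0 = a 0 → (∀ i, x (i+1) = Itv.widen (x i) (a (i+1))) →
        ∃ k, ∀ j ≥ k, x j = x k) := by
  constructor
  · intro a b
    cases a with
    | bot =>
      cases b with
      | bot => exact ⟨trivial, trivial⟩
      | intv l u => exact ⟨trivial, le_refl l, le_refl u⟩
    | intv l0 u0 =>
      cases b with
      | bot => exact ⟨⟨le_refl l0, le_refl u0⟩, trivial⟩
      | intv l1 u1 =>
        constructor
        · refine ⟨?_, ?_⟩
          · split
            · exact bot_le
            · exact le_refl l0
          · split
            · exact le_top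
            · exact le_refl u0
        · refine ⟨?_, ?_⟩
          · split
            · exact bot_le
            · exact le_of_not_gt (by assumption)
          · split
            · exact le_top
            · exact le_of_not_gt (by assumption)
  · intro a _ x _ hstep
    obtain ⟨n, ⟨k, hk⟩, hmin⟩ :=
      Nat.lt_wfRel.wf.has_min (Set.range fun i => (x i).m) ⟨_, Set.mem_range_self 0⟩
    refine ⟨k, fun j hj => ?_⟩
    induction j with
    | zero =>
      have : k = 0 := Nat.le_zero.mp hj
      rw [this]
    | succ j ih =>
      rcases Nat.lt_or_ge k (j + 1) with h | h
      · have hjk : j ≥ k := by omega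
        have hxj : x j = x k := ih hjk
        rcases Itv.widen_step (x j) (a (j + 1)) with he | hlt
        · rw [hstep j, he, hxj]
        · exfalso
          apply hmin _ ⟨j + 1, rfl⟩
          show (x (j + 1)).m < n
          have h2 : (x j).m = n := by rw [hxj]; exact hk
          rw [hstep j, ← h2]
          exact hlt
      · have : j + 1 = k := by omega
        rw [this]
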